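/- arXiv:1805.12490 — 12 statements merged into one kernel-verified Lean document; each statement's English description precedes it below -/
import Mathlib

section
/- Let n ≥ 1 and let Φ₊, Φ₋ : ℝⁿ → ℝⁿ satisfy Φ₋(Φ₊(x)) = x for all x ∈ ℝⁿ. Let P̂ : ℝⁿ × ℝⁿ → ℝ be symmetric, i.e. P̂(x,y) = P̂(y,x) for all x,y, and let p, Δ₊, Δ₋ : ℝⁿ → ℝ with Δ₊ and Δ₋ nowhere vanishing, such that for all x ∈ ℝⁿ one has P̂(x, Φ₊(x)) = p(x)/Δ₊(x) and P̂(x, Φ₋(x)) = p(x)/Δ₋(x). Then for all x ∈ ℝⁿ: Δ₋(Φ₊(x))·p(x) = Δ₊(x)·p(Φ₊(x)). (Since the Jacobian determinant of the Kahan map satisfies det dΦ_f(x) = Δ(Φ₊(x);−ε)/Δ(x;ε), this identity states that the measure dx₁∧…∧dxₙ / p(x) is invariant under Φ₊.) -/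
/-- Theorem 1 a) (invariant measure): if there is a symmetric expression `Phat` with
`Phat x (Φ₊ x) = p x / Δ₊ x` and `Phat x (Φ₋ x) = p x / Δ₋ x`, where `Φ₋ ∘ Φ₊ = id`,
then `Δ₋(Φ₊ x) · p x = Δ₊ x · p (Φ₊ x)`, i.e. the measure `dx / p(x)` is invariant. -/
theorem kahan_invariant_measure
    (n : ℕ) (hn : 1 ≤ n)
    (Φp Φm : (Fin n → ℝ) → (Fin n → ℝ))
    (hinv : ∀ x, Φm (Φp x) = x)
    (Phat : (Fin n → ℝ) → (Fin n → ℝ) → ℝ)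
    (hsym : ∀ x y, Phat x y = Phat y x)
    (p Δp Δm : (Fin n → ℝ) → ℝ)
    (hΔp : ∀ x, Δp x ≠ 0) (hΔm : ∀ x, Δm x ≠ 0)
    (hPp : ∀ x, Phat x (Φp x) = p x / Δp x)
    (hPm : ∀ x, Phat x (Φm x) = p x / Δm x) :
    ∀ x, Δm (Φp x) * p x = Δp x * p (Φp x) := by
  intro x
  have h := hPm (Φp x)
  rw [hinv, ← hsym, hPp] at h
  rw [div_eq_div_iff (hΔp x) (hΔm (Φp x))] at h
  linarith [h]
end

section
/- Let n ≥ 1 and let Φ₊, Φ₋ : ℝⁿ → ℝⁿ satisfy Φ₋(Φ₊(x)) = x for all x ∈ ℝⁿ. Let P̂, Q̂ : ℝⁿ × ℝⁿ → ℝ be symmetric, i.e. P̂(x,y) = P̂(y,x) and Q̂(x,y) = Q̂(y,x) for all x,y, and let p, q, Δ₊, Δ₋ : ℝⁿ → ℝ with Δ₊, Δ₋ and q nowhere vanishing, such that for all x ∈ ℝⁿ: P̂(x, Φ₊(x)) = p(x)/Δ₊(x), P̂(x, Φ₋(x)) = p(x)/Δ₋(x), Q̂(x, Φ₊(x)) =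 q(x)/Δ₊(x), and Q̂(x, Φ₋(x)) = q(x)/Δ₋(x). Then the function J(x) = P̂(x, Φ₊(x)) / Q̂(x, Φ₊(x)) is an integral of motion of Φ₊: for all x ∈ ℝⁿ, J(Φ₊(x)) = J(x); moreover J(x) = p(x)/q(x). -/
/-- Theorem 1 b) (bilinear-fractional integral): under the assumptions of part a) for
two symmetric expressions `Phat`, `Qhat`, the function `J(x) = Phat x (Φ₊ x) / Qhat x (Φ₊ x)`
is an integral of motion of `Φ₊`, and moreover `J(x) = p(x)/q(x)`. -/
theorem kahan_bilinear_fractional_integral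
    (n : ℕ) (hn : 1 ≤ n)
    (Φp Φm : (Fin n → ℝ) → (Fin n → ℝ))
    (hinv : ∀ x, Φm (Φp x) = x)
    (Phat Qhat : (Fin n → ℝ) → (Fin n → ℝ) → ℝ)
    (hPsym : ∀ x y, Phat x y = Phat y x)
    (hQsym : ∀ x y, Qhat x y = Qhat y x)
    (p q Δp Δm : (Fin n → ℝ) → ℝ)
    (hΔp : ∀ x, Δp x ≠ 0) (hΔm : ∀ x, Δm x ≠ 0) (hq : ∀ x, q x ≠ 0)
    (hPp : ∀ x, Phat x (Φp x) = p x / Δp x)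
    (hPm : ∀ x, Phat x (Φm x) = p x / Δm x)
    (hQp : ∀ x, Qhat x (Φp x) = q x / Δp x)
    (hQm : ∀ x, Qhat x (Φm x) = q x / Δm x) :
    (∀ x, Phat (Φp x) (Φp (Φp x)) / Qhat (Φp x) (Φp (Φp x))
          = Phat x (Φp x) / Qhat x (Φp x))
    ∧ (∀ x, Phat x (Φp x) / Qhat x (Φp x) = p x / q x) := by
  have hJ : ∀ x, Phat x (Φp x) / Qhat x (Φp x) = p x / q x := by
    intro x
    rw [hPp, hQp, div_div_div_comm, div_self (hΔp x), div_one]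
  refine ⟨fun x => ?_, hJ⟩
  rw [hJ, hJ]
  -- show p (Φp x) / q (Φp x) = p x / q x
  have hP : p x / Δp x = p (Φp x) / Δm (Φp x) := by
    have := hPm (Φp x)
    rw [hinv x, hPsym (Φp x) x] at this
    rw [← this, hPp]
  have hQ : q x / Δp x = q (Φp x) / Δm (Φp x) := by
    have := hQm (Φp x)
    rw [hinv x, hQsym (Φp x) x] at this
    rw [← this, hQp]
  have h1 : p x * Δm (Φp x) = p (Φp x) * Δp x :=
    (div_eq_div_iff (hΔp x) (hΔm _)).mp hP
  have h2 : q x * Δm (Φp x) = q (Φp x) * Δp x :=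
    (div_eq_div_iff (hΔp x) (hΔm _)).mp hQ
  rw [div_eq_div_iff (hq _) (hq _)]
  have hd := hΔp x
  have hd' := hΔm (Φp x)
  have : (p (Φp x) * q x) * (Δp x * Δm (Φp x)) = (p x * q (Φp x)) * (Δp x * Δm (Φp x)) :=
    calc (p (Φp x) * q x) * (Δp x * Δm (Φp x))
        = (p (Φp x) * Δp x) * (q x * Δm (Φp x)) := by ring
      _ = (p x * Δm (Φp x)) * (q (Φp x) * Δp x) := by rw [← h1, h2]
      _ = (p x * q (Φp x)) * (Δp x * Δm (Φp x)) := by ring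
  exact mul_right_cancel₀ (mul_ne_zero hd hd') this
end

section
/- Let ω1, ω2, ω3 ∈ ℝ and define on ℝ³ × ℝ³ the functions H1(m,p) = m1² + m2² + m3² + ω1p1² + ω2p2² + ω3p3² and H2(m,p) = ω1m1² + ω2m2² + ω3m3² − ω2ω3p1² − ω3ω1p2² − ω1ω2p3². Then H1 and H2 are in involution with respect to the Lie–Poisson bracket of e(3)*: for all (m,p) ∈ ℝ³ × ℝ³, ⟨m, ∇ₘH1 × ∇ₘH2⟩ + ⟨p, ∇ₘH1 × ∇ₚH2⟩ + ⟨p, ∇ₚH1 × ∇ₘH2⟩ = 0, where ∇ₘH1 = 2m, ∇ₚH1 = 2(ω1p1, ω2p2, ω3p3), ∇ₘH2 = 2(ω1m1, ω2m2, ω3m3), ∇ₚH2 = −2(ω2ω3p1, ω3ω1p2, ω1ω2p3), × denotes the cross product and ⟨·,·⟩ the Euclidean scalar product on ℝ³. -/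
open Matrix

/-- The Hamiltonians `H1 = m₁²+m₂²+m₃²+ω₁p₁²+ω₂p₂²+ω₃p₃²` and
`H2 = ω₁m₁²+ω₂m₂²+ω₃m₃²−ω₂ω₃p₁²−ω₃ω₁p₂²−ω₁ω₂p₃²` of the first and second Clebsch
flows are in involution with respect to the Lie–Poisson bracket of `e(3)*`:
`⟨m, ∇ₘH1 × ∇ₘH2⟩ + ⟨p, ∇ₘH1 × ∇ₚH2⟩ + ⟨p, ∇ₚH1 × ∇ₘH2⟩ = 0`,
with the gradients `∇ₘH1 = 2m`, `∇ₚH1 = 2(ω₁p₁,ω₂p₂,ω₃p₃)`,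
`∇ₘH2 = 2(ω₁m₁,ω₂m₂,ω₃m₃)`, `∇ₚH2 = −2(ω₂ω₃p₁,ω₃ω₁p₂,ω₁ω₂p₃)`. -/
theorem clebsch_hamiltonians_in_involution
    (ω1 ω2 ω3 : ℝ) (m p : Fin 3 → ℝ) :
    m ⬝ᵥ (crossProduct (fun i => 2 * m i)
            ![2 * ω1 * m 0, 2 * ω2 * m 1, 2 * ω3 * m 2])
    + p ⬝ᵥ (crossProduct (fun i => 2 * m i)
            ![-(2 * ω2 * ω3 * p 0), -(2 * ω3 * ω1 * p 1), -(2 * ω1 * ω2 * p 2)])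
    + p ⬝ᵥ (crossProduct ![2 * ω1 * p 0, 2 * ω2 * p 1, 2 * ω3 * p 2]
            ![2 * ω1 * m 0, 2 * ω2 * m 1, 2 * ω3 * m 2]) = 0 := by
  simp [crossProduct, dotProduct, Fin.sum_univ_three]
  ring
end

section
/- Let a1, a2, a3 be nonzero reals and b1, b2, b3 ∈ ℝ. Consider the general Clebsch vector field on ℝ³ × ℝ³: ṁ1 = (a3−a2)m2m3 + (b3−b2)p2p3, ṁ2 = (a1−a3)m3m1 + (b1−b3)p3p1, ṁ3 = (a2−a1)m1m2 + (b2−b1)p1p2, ṗ1 = a3m3p2 − a2m2p3, ṗ2 = a1m1p3 − a3m3p1, ṗ3 = a2m2p1 − a1m1p2. Then the following are equivalent: (i) the Clebsch condition (b1−b2)/a3 + (b2−b3)/a1 + (b3−b1)/a2 = 0 holds; (ii) there exist constants (A1,A2,A3) ≠ (0,0,0) such that for all (m,p) ∈ ℝ³ × ℝ³, A1(ṁ1p1 − m1ṗ1) + A2(ṁ2p2 − m2ṗ2) + A3(ṁ3p3 − m3ṗ3) = 0. Moreover, any such (A1,A2,A3) is a scalar multiple of (1/a2 + 1/a3 − 1/a1,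 1/a3 + 1/a1 − 1/a2, 1/a1 + 1/a2 − 1/a3). -/
set_option maxHeartbeats 1000000


/-- For the general Clebsch vector field, the Clebsch condition
`(b1−b2)/a3 + (b2−b3)/a1 + (b3−b1)/a2 = 0` is equivalent to the existence of a
nontrivial Wronskian relation `∑ Aᵢ(ṁᵢpᵢ − mᵢṗᵢ) = 0` with constant coefficients;
moreover any such triple `(A1,A2,A3)` is proportional to
`(1/a2+1/a3−1/a1, 1/a3+1/a1−1/a2, 1/a1+1/a2−1/a3)`. -/
theorem clebsch_condition_iff_wronskian_relation
    (a1 a2 a3 b1 b2 b3 : ℝ) (ha1 : a1 ≠ 0) (ha2 : a2 ≠ 0) (ha3 : a3 ≠ 0) :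
    ((b1 - b2) / a3 + (b2 - b3) / a1 + (b3 - b1) / a2 = 0 ↔
      ∃ A1 A2 A3 : ℝ, (A1, A2, A3) ≠ (0, 0, 0) ∧
        ∀ m1 m2 m3 p1 p2 p3 : ℝ,
          A1 * (((a3 - a2) * m2 * m3 + (b3 - b2) * p2 * p3) * p1
                - m1 * (a3 * m3 * p2 - a2 * m2 * p3))
          + A2 * (((a1 - a3) * m3 * m1 + (b1 - b3) * p3 * p1) * p2
                - m2 * (a1 * m1 * p3 - a3 * m3 * p1))
          + A3 * (((a2 - a1) * m1 * m2 + (b2 - b1) * p1 * p2) * p3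
                - m3 * (a2 * m2 * p1 - a1 * m1 * p2)) = 0)
    ∧ (∀ A1 A2 A3 : ℝ, (A1, A2, A3) ≠ (0, 0, 0) →
        (∀ m1 m2 m3 p1 p2 p3 : ℝ,
          A1 * (((a3 - a2) * m2 * m3 + (b3 - b2) * p2 * p3) * p1
                - m1 * (a3 * m3 * p2 - a2 * m2 * p3))
          + A2 * (((a1 - a3) * m3 * m1 + (b1 - b3) * p3 * p1) * p2
                - m2 * (a1 * m1 * p3 - a3 * m3 * p1))
          + A3 * (((a2 - a1) * m1 * m2 + (b2 - b1) * p1 * p2) * p3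
                - m3 * (a2 * m2 * p1 - a1 * m1 * p2)) = 0) →
        ∃ t : ℝ, A1 = t * (1 / a2 + 1 / a3 - 1 / a1)
               ∧ A2 = t * (1 / a3 + 1 / a1 - 1 / a2)
               ∧ A3 = t * (1 / a1 + 1 / a2 - 1 / a3)) := by
  have main : ∀ A1 A2 A3 : ℝ, (A1, A2, A3) ≠ (0, 0, 0) →
      (∀ m1 m2 m3 p1 p2 p3 : ℝ,
        A1 * (((a3 - a2) * m2 * m3 + (b3 - b2) * p2 * p3) * p1
              - m1 * (a3 * m3 * p2 - a2 * m2 * p3))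
        + A2 * (((a1 - a3) * m3 * m1 + (b1 - b3) * p3 * p1) * p2
              - m2 * (a1 * m1 * p3 - a3 * m3 * p1))
        + A3 * (((a2 - a1) * m1 * m2 + (b2 - b1) * p1 * p2) * p3
              - m3 * (a2 * m2 * p1 - a1 * m1 * p2)) = 0) →
      ∃ t : ℝ, t ≠ 0 ∧ A1 = t * (1 / a2 + 1 / a3 - 1 / a1)
             ∧ A2 = t * (1 / a3 + 1 / a1 - 1 / a2)
             ∧ A3 = t * (1 / a1 + 1 / a2 - 1 / a3) := by
    intro A1 A2 A3 hne h
    have e2 := h 1 0 1 0 1 0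
    have e3 := h 1 1 0 0 0 1
    have p1 : A1 = (a1*(A2+A3)/2) * (1/a2+1/a3-1/a1) := by
      linear_combination (norm := (field_simp; ring1)) (1/(2*a2))*e3 - (1/(2*a3))*e2
    have p2 : A2 = (a1*(A2+A3)/2) * (1/a3+1/a1-1/a2) := by
      linear_combination (norm := (field_simp; ring1)) (-(1/(2*a3)))*e2 - (1/(2*a2))*e3
    have p3 : A3 = (a1*(A2+A3)/2) * (1/a1+1/a2-1/a3) := by
      linear_combination (norm := (field_simp; ring1)) (1/(2*a2))*e3 + (1/(2*a3))*e2
    refine ⟨a1 * (A2 + A3) / 2, ?_, p1, p2, p3⟩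
    intro ht0
    apply hne
    have hA1 : A1 = 0 := by rw [p1, ht0, zero_mul]
    have hA2 : A2 = 0 := by rw [p2, ht0, zero_mul]
    have hA3 : A3 = 0 := by rw [p3, ht0, zero_mul]
    rw [hA1, hA2, hA3]
  constructor
  · constructor
    · intro hC
      refine ⟨1/a2+1/a3-1/a1, 1/a3+1/a1-1/a2, 1/a1+1/a2-1/a3, ?_, ?_⟩
      · intro hz
        rw [Prod.mk.injEq, Prod.mk.injEq] at hz
        obtain ⟨h1, h2, _⟩ := hz
        have h23 : (2:ℝ)/a3 = 0 := by linear_combination h1 + h2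
        rw [div_eq_zero_iff] at h23
        rcases h23 with h | h
        · norm_num at h
        · exact ha3 h
      · intro m1 m2 m3 p1 p2 p3
        linear_combination (norm := (field_simp; ring1)) (2*p1*p2*p3) * hC
    · rintro ⟨A1, A2, A3, hne, h⟩
      obtain ⟨t, ht0, hA1, hA2, hA3⟩ := main A1 A2 A3 hne h
      have e4 := h 0 0 0 1 1 1
      have key : t * ((b1 - b2) / a3 + (b2 - b3) / a1 + (b3 - b1) / a2) = 0 := by
        rw [hA1, hA2, hA3] at e4
        linear_combination (norm := (field_simp; ring1)) (1/2) * e4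
      exact (mul_eq_zero.mp key).resolve_left ht0
  · intro A1 A2 A3 hne h
    obtain ⟨t, _, hA1, hA2, hA3⟩ := main A1 A2 A3 hne h
    exact ⟨t, hA1, hA2, hA3⟩
end

section
/- Suppose (m,p) and (m̃,p̃) are KHK-related for the Clebsch system with the Clebsch condition (β ≠ 0). Define N(m,p) = A1a2a3·g1(m,p) + A2a3a1·g2(m,p) + A3a1a2·g3(m,p) and D(m,p) = 1 + ε²(a1a2a3/β)(g1(m,p) + g2(m,p) + g3(m,p)). Then N(m̃,p̃)·D(m,p) = N(m,p)·D(m̃,p̃); that is, the quadratic-fractional function I0 = N/D is an integral of motion of the Kahan–Hirota–Kimura discretization of the Clebsch system. -/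
/-- `(m,p)` and `(n,q)` are KHK-related for the general Clebsch system. -/
def ClebschKHK (ε a1 a2 a3 b1 b2 b3 m1 m2 m3 p1 p2 p3 n1 n2 n3 q1 q2 q3 : ℝ) : Prop :=
  n1 - m1 = ε * (a3 - a2) * (n2 * m3 + m2 * n3) + ε * (b3 - b2) * (q2 * p3 + p2 * q3) ∧
  n2 - m2 = ε * (a1 - a3) * (n3 * m1 + m3 * n1) + ε * (b1 - b3) * (q3 * p1 + p3 * q1) ∧
  n3 - m3 = ε * (a2 - a1) * (n1 * m2 + m1 * n2) + ε * (b2 - b1) * (q1 * p2 + p1 * q2) ∧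
  q1 - p1 = ε * a3 * (n3 * p2 + m3 * q2) - ε * a2 * (n2 * p3 + m2 * q3) ∧
  q2 - p2 = ε * a1 * (n1 * p3 + m1 * q3) - ε * a3 * (n3 * p1 + m3 * q1) ∧
  q3 - p3 = ε * a2 * (n2 * p1 + m2 * q1) - ε * a1 * (n1 * p2 + m1 * q2)

/-- The Clebsch condition, parametrized by `β ≠ 0`. -/
def ClebschCond (β a1 a2 a3 b1 b2 b3 : ℝ) : Prop :=
  b1 - b2 = a3 * (a1 - a2) / β ∧ b2 - b3 = a1 * (a2 - a3) / β ∧ b3 - b1 = a2 * (a3 - a1) / β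

noncomputable def cA1 (a1 a2 a3 : ℝ) : ℝ := 1 / a2 + 1 / a3 - 1 / a1
noncomputable def cA2 (a1 a2 a3 : ℝ) : ℝ := 1 / a3 + 1 / a1 - 1 / a2
noncomputable def cA3 (a1 a2 a3 : ℝ) : ℝ := 1 / a1 + 1 / a2 - 1 / a3

/-- `g₁(m,p) = p₁² + (βa₁/(a₂a₃))m₁²` and cyclic analogues. -/
noncomputable def cg1 (β a1 a2 a3 m1 p1 : ℝ) : ℝ := p1 ^ 2 + (β * a1 / (a2 * a3)) * m1 ^ 2
noncomputable def cg2 (β a1 a2 a3 m2 p2 : ℝ) : ℝ := p2 ^ 2 + (β * a2 / (a3 * a1)) * m2 ^ 2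
noncomputable def cg3 (β a1 a2 a3 m3 p3 : ℝ) : ℝ := p3 ^ 2 + (β * a3 / (a1 * a2)) * m3 ^ 2

/-- `G₁ = p₁p̃₁ + (βa₁/(a₂a₃))m₁m̃₁` and cyclic analogues. -/
noncomputable def cG1 (β a1 a2 a3 m1 p1 n1 q1 : ℝ) : ℝ := p1 * q1 + (β * a1 / (a2 * a3)) * m1 * n1
noncomputable def cG2 (β a1 a2 a3 m2 p2 n2 q2 : ℝ) : ℝ := p2 * q2 + (β * a2 / (a3 * a1)) * m2 * n2
noncomputable def cG3 (β a1 a2 a3 m3 p3 n3 q3 : ℝ) : ℝ := p3 * q3 + (β * a3 / (a1 * a2)) * m3 * n3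

set_option maxHeartbeats 4000000 in
/-- Quadratic-fractional integral `I₀ = (∑ Aᵢaⱼaₖ gᵢ)/(1 + ε²(a₁a₂a₃/β)(g₁+g₂+g₃))`
of the KHK discretization of the Clebsch system (Theorem 3). -/
theorem clebsch_quadratic_fractional_integral
    (ε β a1 a2 a3 b1 b2 b3 : ℝ) (hβ : β ≠ 0)
    (ha1 : a1 ≠ 0) (ha2 : a2 ≠ 0) (ha3 : a3 ≠ 0)
    (hcond : ClebschCond β a1 a2 a3 b1 b2 b3)
    (m1 m2 m3 p1 p2 p3 n1 n2 n3 q1 q2 q3 : ℝ)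
    (hK : ClebschKHK ε a1 a2 a3 b1 b2 b3 m1 m2 m3 p1 p2 p3 n1 n2 n3 q1 q2 q3) :
    (cA1 a1 a2 a3 * a2 * a3 * cg1 β a1 a2 a3 n1 q1
      + cA2 a1 a2 a3 * a3 * a1 * cg2 β a1 a2 a3 n2 q2
      + cA3 a1 a2 a3 * a1 * a2 * cg3 β a1 a2 a3 n3 q3)
    * (1 + ε ^ 2 * (a1 * a2 * a3 / β)
        * (cg1 β a1 a2 a3 m1 p1 + cg2 β a1 a2 a3 m2 p2 + cg3 β a1 a2 a3 m3 p3))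
    = (cA1 a1 a2 a3 * a2 * a3 * cg1 β a1 a2 a3 m1 p1
      + cA2 a1 a2 a3 * a3 * a1 * cg2 β a1 a2 a3 m2 p2
      + cA3 a1 a2 a3 * a1 * a2 * cg3 β a1 a2 a3 m3 p3)
    * (1 + ε ^ 2 * (a1 * a2 * a3 / β)
        * (cg1 β a1 a2 a3 n1 q1 + cg2 β a1 a2 a3 n2 q2 + cg3 β a1 a2 a3 n3 q3)) := by
  obtain ⟨hk1, hk2, hk3, hk4, hk5, hk6⟩ := hK
  obtain ⟨hb12, hb23, hb31⟩ := hcond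
  rw [eq_div_iff hβ] at hb12 hb23 hb31

  have hR1 : β*(n1-m1) = ε*β*(a3-a2)*(n2*m3+m2*n3) - ε*a1*(a2-a3)*(q2*p3+p2*q3) := by
    linear_combination β*hk1 - ε*(q2*p3+p2*q3)*hb23
  have hR2 : β*(n2-m2) = ε*β*(a1-a3)*(n3*m1+m3*n1) - ε*a2*(a3-a1)*(q3*p1+p3*q1) := by
    linear_combination β*hk2 - ε*(q3*p1+p3*q1)*hb31
  have hR3 : β*(n3-m3) = ε*β*(a2-a1)*(n1*m2+m1*n2) - ε*a3*(a1-a2)*(q1*p2+p1*q2) := by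
    linear_combination β*hk3 - ε*(q1*p2+p1*q2)*hb12
  have hR4 : q1-p1 = ε*a3*(n3*p2+m3*q2) - ε*a2*(n2*p3+m2*q3) := hk4
  have hR5 : q2-p2 = ε*a1*(n1*p3+m1*q3) - ε*a3*(n3*p1+m3*q1) := hk5
  have hR6 : q3-p3 = ε*a2*(n2*p1+m2*q1) - ε*a1*(n1*p2+m1*q2) := hk6
  have key : (q3^2*a1*a2^2*a3 + q3^2*a1^2*a2*a3 - q3^2*a1^2*a2^2 + q2^2*a1*a2*a3^2 - q2^2*a1^2*a3^2 + q2^2*a1^2*a2*a3 - q1^2*a2^2*a3^2 + q1^2*a1*a2*a3^2 + q1^2*a1*a2^2*a3 + n3^2*β*a2*a3^2 + n3^2*β*a1*a3^2 - n3^2*β*a1*a2*a3 + n2^2*β*a2^2*a3 - n2^2*β*a1*a2*a3 + n2^2*β*a1*a2^2 - n1^2*β*a1*a2*a3 + n1^2*β*a1^2*a3 + n1^2*β*a1^2*a2) * (β*a1*a2*a3 + p3^2*ε^2*a1^2*a2^2*a3^2 + p2^2*ε^2*a1^2*a2^2*a3^2 + p1^2*ε^2*a1^2*a2^2*a3^2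 + m3^2*ε^2*β*a1*a2*a3^3 + m2^2*ε^2*β*a1*a2^3*a3 + m1^2*ε^2*β*a1^3*a2*a3)
      = (p3^2*a1*a2^2*a3 + p3^2*a1^2*a2*a3 - p3^2*a1^2*a2^2 + p2^2*a1*a2*a3^2 - p2^2*a1^2*a3^2 + p2^2*a1^2*a2*a3 - p1^2*a2^2*a3^2 + p1^2*a1*a2*a3^2 + p1^2*a1*a2^2*a3 + m3^2*β*a2*a3^2 + m3^2*β*a1*a3^2 - m3^2*β*a1*a2*a3 + m2^2*β*a2^2*a3 - m2^2*β*a1*a2*a3 + m2^2*β*a1*a2^2 - m1^2*β*a1*a2*a3 + m1^2*β*a1^2*a3 + m1^2*β*a1^2*a2) * (β*a1*a2*a3 + q3^2*ε^2*a1^2*a2^2*a3^2 + q2^2*ε^2*a1^2*a2^2*a3^2 + q1^2*ε^2*a1^2*a2^2*a3^2 + n3^2*ε^2*β*a1*a2*a3^3 + n2^2*ε^2*β*a1*a2^3*a3 + n1^2*ε^2*β*a1^3*a2*a3) := by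
    linear_combination -(m1*β*a1^2*a2^2*a3^2) * hR1 + (m1*β*a1^3*a2*a3^2) * hR1 + (m1*β*a1^3*a2^2*a3) * hR1 + (q3*p2*ε*a1^2*a2^3*a3^3) * hR1 - (q3*p2*ε*a1^3*a2^2*a3^3) * hR1 - (q3*p2*ε*a1^3*a2^3*a3^2) * hR1 - (q2*p3*ε*a1^2*a2^3*a3^3) * hR1 + (q2*p3*ε*a1^3*a2^2*a3^3) * hR1 + (q2*p3*ε*a1^3*a2^3*a3^2) * hR1 + (n3*m2*ε*β*a1*a2^3*a3^3) * hR1 - (n3*m2*ε*β*a1^2*a2^2*a3^3) * hR1 - (n3*m2*ε*β*a1^2*a2^3*a3^2) * hR1 - (n2*m3*ε*β*a1*a2^3*a3^3) * hR1 + (n2*m3*ε*β*a1^2*a2^2*a3^3) * hR1 + (n2*m3*ε*β*a1^2*a2^3*a3^2) * hR1 - (n1*β*a1^2*a2^2*a3^2) * hR1 + (n1*β*a1^3*a2*a3^2) * hR1 + (n1*β*a1^3*a2^2*a3) * hR1 + (m2*β*a1*a2^3*a3^2) * hR2 - (m2*β*a1^2*a2^2*a3^2) * hR2 + (m2*β*a1^2*a2^3*a3)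 * hR2 + (q3*p1*ε*a1^2*a2^3*a3^3) * hR2 - (q3*p1*ε*a1^3*a2^2*a3^3) * hR2 + (q3*p1*ε*a1^3*a2^3*a3^2) * hR2 - (q1*p3*ε*a1^2*a2^3*a3^3) * hR2 + (q1*p3*ε*a1^3*a2^2*a3^3) * hR2 - (q1*p3*ε*a1^3*a2^3*a3^2) * hR2 + (n3*m1*ε*β*a1^2*a2^2*a3^3) * hR2 - (n3*m1*ε*β*a1^3*a2*a3^3) * hR2 + (n3*m1*ε*β*a1^3*a2^2*a3^2) * hR2 + (n2*β*a1*a2^3*a3^2) * hR2 - (n2*β*a1^2*a2^2*a3^2) * hR2 + (n2*β*a1^2*a2^3*a3) * hR2 - (n1*m3*ε*β*a1^2*a2^2*a3^3) * hR2 + (n1*m3*ε*β*a1^3*a2*a3^3) * hR2 - (n1*m3*ε*β*a1^3*a2^2*a3^2) * hR2 + (m3*β*a1*a2^2*a3^3) * hR3 + (m3*β*a1^2*a2*a3^3) * hR3 - (m3*β*a1^2*a2^2*a3^2) * hR3 - (q2*p1*ε*a1^2*a2^3*a3^3) * hR3 - (q2*p1*ε*a1^3*a2^2*a3^3) * hR3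 + (q2*p1*ε*a1^3*a2^3*a3^2) * hR3 + (q1*p2*ε*a1^2*a2^3*a3^3) * hR3 + (q1*p2*ε*a1^3*a2^2*a3^3) * hR3 - (q1*p2*ε*a1^3*a2^3*a3^2) * hR3 + (n3*β*a1*a2^2*a3^3) * hR3 + (n3*β*a1^2*a2*a3^3) * hR3 - (n3*β*a1^2*a2^2*a3^2) * hR3 - (n2*m1*ε*β*a1^2*a2^3*a3^2) * hR3 - (n2*m1*ε*β*a1^3*a2^2*a3^2) * hR3 + (n2*m1*ε*β*a1^3*a2^3*a3) * hR3 + (n1*m2*ε*β*a1^2*a2^3*a3^2) * hR3 + (n1*m2*ε*β*a1^3*a2^2*a3^2) * hR3 - (n1*m2*ε*β*a1^3*a2^3*a3) * hR3 - (p1*β*a1*a2^3*a3^3) * hR4 + (p1*β*a1^2*a2^2*a3^3) * hR4 + (p1*β*a1^2*a2^3*a3^2) * hR4 - (q3*m2*ε*β*a1^2*a2^3*a3^3) * hR4 + (q3*m2*ε*β*a1^2*a2^4*a3^2) * hR4 + (q3*m2*ε*β*a1^3*a2^2*a3^3) * hR4 - (q3*m2*ε*β*a1^3*a2^4*a3)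 * hR4 - (q2*m3*ε*β*a1^2*a2^2*a3^4) * hR4 + (q2*m3*ε*β*a1^2*a2^3*a3^3) * hR4 + (q2*m3*ε*β*a1^3*a2*a3^4) * hR4 - (q2*m3*ε*β*a1^3*a2^3*a3^2) * hR4 - (q1*β*a1*a2^3*a3^3) * hR4 + (q1*β*a1^2*a2^2*a3^3) * hR4 + (q1*β*a1^2*a2^3*a3^2) * hR4 + (n3*p2*ε*β*a1^2*a2^2*a3^4) * hR4 - (n3*p2*ε*β*a1^2*a2^3*a3^3) * hR4 - (n3*p2*ε*β*a1^3*a2*a3^4) * hR4 + (n3*p2*ε*β*a1^3*a2^3*a3^2) * hR4 + (n2*p3*ε*β*a1^2*a2^3*a3^3) * hR4 - (n2*p3*ε*β*a1^2*a2^4*a3^2) * hR4 - (n2*p3*ε*β*a1^3*a2^2*a3^3) * hR4 + (n2*p3*ε*β*a1^3*a2^4*a3) * hR4 + (p2*β*a1^2*a2^2*a3^3) * hR5 - (p2*β*a1^3*a2*a3^3) * hR5 + (p2*β*a1^3*a2^2*a3^2) * hR5 - (q3*m1*ε*β*a1^2*a2^3*a3^3) * hR5 + (q3*m1*ε*β*a1^3*a2^2*a3^3)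 * hR5 - (q3*m1*ε*β*a1^4*a2^2*a3^2) * hR5 + (q3*m1*ε*β*a1^4*a2^3*a3) * hR5 + (q2*β*a1^2*a2^2*a3^3) * hR5 - (q2*β*a1^3*a2*a3^3) * hR5 + (q2*β*a1^3*a2^2*a3^2) * hR5 - (q1*m3*ε*β*a1*a2^3*a3^4) * hR5 + (q1*m3*ε*β*a1^2*a2^2*a3^4) * hR5 - (q1*m3*ε*β*a1^3*a2^2*a3^3) * hR5 + (q1*m3*ε*β*a1^3*a2^3*a3^2) * hR5 + (n3*p1*ε*β*a1*a2^3*a3^4) * hR5 - (n3*p1*ε*β*a1^2*a2^2*a3^4) * hR5 + (n3*p1*ε*β*a1^3*a2^2*a3^3) * hR5 - (n3*p1*ε*β*a1^3*a2^3*a3^2) * hR5 + (n1*p3*ε*β*a1^2*a2^3*a3^3) * hR5 - (n1*p3*ε*β*a1^3*a2^2*a3^3) * hR5 + (n1*p3*ε*β*a1^4*a2^2*a3^2) * hR5 - (n1*p3*ε*β*a1^4*a2^3*a3) * hR5 + (p3*β*a1^2*a2^3*a3^2) * hR6 + (p3*β*a1^3*a2^2*a3^2) * hR6 - (p3*β*a1^3*a2^3*a3)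 * hR6 + (q3*β*a1^2*a2^3*a3^2) * hR6 + (q3*β*a1^3*a2^2*a3^2) * hR6 - (q3*β*a1^3*a2^3*a3) * hR6 + (q2*m1*ε*β*a1^2*a2^3*a3^3) * hR6 - (q2*m1*ε*β*a1^3*a2^3*a3^2) * hR6 - (q2*m1*ε*β*a1^4*a2*a3^3) * hR6 + (q2*m1*ε*β*a1^4*a2^2*a3^2) * hR6 + (q1*m2*ε*β*a1*a2^4*a3^3) * hR6 - (q1*m2*ε*β*a1^2*a2^4*a3^2) * hR6 - (q1*m2*ε*β*a1^3*a2^2*a3^3) * hR6 + (q1*m2*ε*β*a1^3*a2^3*a3^2) * hR6 - (n2*p1*ε*β*a1*a2^4*a3^3) * hR6 + (n2*p1*ε*β*a1^2*a2^4*a3^2) * hR6 + (n2*p1*ε*β*a1^3*a2^2*a3^3) * hR6 - (n2*p1*ε*β*a1^3*a2^3*a3^2) * hR6 - (n1*p2*ε*β*a1^2*a2^3*a3^3) * hR6 + (n1*p2*ε*β*a1^3*a2^3*a3^2) * hR6 + (n1*p2*ε*β*a1^4*a2*a3^3) * hR6 - (n1*p2*ε*β*a1^4*a2^2*a3^2)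 * hR6

  have hc : β * (a1 * a2 * a3) ^ 2 ≠ 0 :=
    mul_ne_zero hβ (pow_ne_zero _ (mul_ne_zero (mul_ne_zero ha1 ha2) ha3))
  apply mul_right_cancel₀ hc
  calc (cA1 a1 a2 a3 * a2 * a3 * cg1 β a1 a2 a3 n1 q1
      + cA2 a1 a2 a3 * a3 * a1 * cg2 β a1 a2 a3 n2 q2
      + cA3 a1 a2 a3 * a1 * a2 * cg3 β a1 a2 a3 n3 q3)
    * (1 + ε ^ 2 * (a1 * a2 * a3 / β)
        * (cg1 β a1 a2 a3 m1 p1 + cg2 β a1 a2 a3 m2 p2 + cg3 β a1 a2 a3 m3 p3))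
    * (β * (a1 * a2 * a3) ^ 2)
      = _ := by
        simp only [cA1, cA2, cA3, cg1, cg2, cg3]
        field_simp
        ring
    _ = _ := key
    _ = (cA1 a1 a2 a3 * a2 * a3 * cg1 β a1 a2 a3 m1 p1
      + cA2 a1 a2 a3 * a3 * a1 * cg2 β a1 a2 a3 m2 p2
      + cA3 a1 a2 a3 * a1 * a2 * cg3 β a1 a2 a3 m3 p3)
    * (1 + ε ^ 2 * (a1 * a2 * a3 / β)
        * (cg1 β a1 a2 a3 n1 q1 + cg2 β a1 a2 a3 n2 q2 + cg3 β a1 a2 a3 n3 q3))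
    * (β * (a1 * a2 * a3) ^ 2) := by
        simp only [cA1, cA2, cA3, cg1, cg2, cg3]
        field_simp
        ring
end

section
/- Suppose (m,p) and (m̃,p̃) are KHK-related for the first Clebsch flow. Then (p̃1² + p̃2² + p̃3²)·(1 − ε²(ω1p1² + ω2p2² + ω3p3²)) = (p1² + p2² + p3²)·(1 − ε²(ω1p̃1² + ω2p̃2² + ω3p̃3²)); that is, the quadratic-fractional function I0(m,p) = (p1²+p2²+p3²)/(1 − ε²(ω1p1²+ω2p2²+ω3p3²)) is an integral of motion of the Kahan–Hirota–Kimura discretization of the first Clebsch flow. -/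
/-- `(m,p)` and `(n,q)` are KHK-related for the first Clebsch flow. -/
def Clebsch1KHK (ε ω1 ω2 ω3 m1 m2 m3 p1 p2 p3 n1 n2 n3 q1 q2 q3 : ℝ) : Prop :=
  n1 - m1 = ε * (ω3 - ω2) * (q2 * p3 + p2 * q3) ∧
  n2 - m2 = ε * (ω1 - ω3) * (q3 * p1 + p3 * q1) ∧
  n3 - m3 = ε * (ω2 - ω1) * (q1 * p2 + p1 * q2) ∧
  q1 - p1 = ε * (n3 * p2 + m3 * q2) - ε * (n2 * p3 + m2 * q3) ∧
  q2 - p2 = ε * (n1 * p3 + m1 * q3) - ε * (n3 * p1 + m3 * q1) ∧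
  q3 - p3 = ε * (n2 * p1 + m2 * q1) - ε * (n1 * p2 + m1 * q2)

/-- Quadratic-fractional integral of the KHK discretization of the first Clebsch flow
(Theorem 8): `I₀ = (p₁²+p₂²+p₃²)/(1 − ε²(ω₁p₁²+ω₂p₂²+ω₃p₃²))` is conserved. -/
theorem clebsch1_quadratic_fractional_integral
    (ε ω1 ω2 ω3 m1 m2 m3 p1 p2 p3 n1 n2 n3 q1 q2 q3 : ℝ)
    (hK : Clebsch1KHK ε ω1 ω2 ω3 m1 m2 m3 p1 p2 p3 n1 n2 n3 q1 q2 q3) :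
    (q1 ^ 2 + q2 ^ 2 + q3 ^ 2)
      * (1 - ε ^ 2 * (ω1 * p1 ^ 2 + ω2 * p2 ^ 2 + ω3 * p3 ^ 2))
    = (p1 ^ 2 + p2 ^ 2 + p3 ^ 2)
      * (1 - ε ^ 2 * (ω1 * q1 ^ 2 + ω2 * q2 ^ 2 + ω3 * q3 ^ 2)) := by
  obtain ⟨e1, e2, e3, f1, f2, f3⟩ := hK
  linear_combination (q1 + p1) * f1 + (q2 + p2) * f2 + (q3 + p3) * f3 +
    ε * (q2 * p3 - q3 * p2) * e1 + ε * (q3 * p1 - q1 * p3) * e2 +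
    ε * (q1 * p2 - q2 * p1) * e3
end

section
/- Suppose (m,p), (m̃,p̃) are KHK-related for the first Clebsch flow, and (m̃,p̃), (m̿,p̿) are also KHK-related. Then (p1p̃1 + p2p̃2 + p3p̃3)·(1 + ε²(ω1p̃1p̿1 + ω2p̃2p̿2 + ω3p̃3p̿3)) = (p̃1p̿1 + p̃2p̿2 + p̃3p̿3)·(1 + ε²(ω1p1p̃1 + ω2p2p̃2 + ω3p3p̃3)); that is, the bilinear-fractional function J0 = (p1p̃1+p2p̃2+p3p̃3)/(1 + ε²(ω1p1p̃1+ω2p2p̃2+ω3p3p̃3)) is an integral of motion of the Kahan–Hirota–Kimura discretization of the first Clebsch flow. -/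
/-- Bilinear-fractional integral of the KHK discretization of the first Clebsch flow
(Theorem 11): `J₀ = (p₁p̃₁+p₂p̃₂+p₃p̃₃)/(1 + ε²(ω₁p₁p̃₁+ω₂p₂p̃₂+ω₃p₃p̃₃))` is conserved. -/
theorem clebsch1_bilinear_fractional_integral
    (ε ω1 ω2 ω3 m1 m2 m3 p1 p2 p3 n1 n2 n3 q1 q2 q3 u1 u2 u3 v1 v2 v3 : ℝ)
    (hK1 : Clebsch1KHK ε ω1 ω2 ω3 m1 m2 m3 p1 p2 p3 n1 n2 n3 q1 q2 q3)
    (hK2 : Clebsch1KHK ε ω1 ω2 ω3 n1 n2 n3 q1 q2 q3 u1 u2 u3 v1 v2 v3) :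
    (p1 * q1 + p2 * q2 + p3 * q3)
      * (1 + ε ^ 2 * (ω1 * q1 * v1 + ω2 * q2 * v2 + ω3 * q3 * v3))
    = (q1 * v1 + q2 * v2 + q3 * v3)
      * (1 + ε ^ 2 * (ω1 * p1 * q1 + ω2 * p2 * q2 + ω3 * p3 * q3)) := by
  obtain ⟨h1, h2, h3, h4, h5, h6⟩ := hK1
  obtain ⟨h7, h8, h9, h10, h11, h12⟩ := hK2
  linear_combination
    ((1/2) * ε * q3 * v2 - (1/2) * ε * q2 * v3) * h1
    + (- (1/2) * ε * q3 * v1 + (1/2) * ε * q1 * v3) * h2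
    + ((1/2) * ε * q2 * v1 - (1/2) * ε * q1 * v2) * h3
    + (- v1 - (1/2) * ε * q3 * u2 + (1/2) * ε * q2 * u3 + (1/2) * ε * n3 * v2 - (1/2) * ε * n2 * v3) * h4
    + (- v2 + (1/2) * ε * q3 * u1 - (1/2) * ε * q1 * u3 - (1/2) * ε * n3 * v1 + (1/2) * ε * n1 * v3) * h5
    + (- q3 + (1/2) * ε * q2 * u1 - (1/2) * ε * q1 * u2 - (1/2) * ε * n2 * v1 + (1/2) * ε * n1 * v2) * h6
    + ((1/2) * ε * p3 * q2 - (1/2) * ε * p2 * q3) * h7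
    + (- (1/2) * ε * p3 * q1 + (1/2) * ε * p1 * q3) * h8
    + ((1/2) * ε * p2 * q1 - (1/2) * ε * p1 * q2) * h9
    + (- p1 + (1/2) * ε * p3 * n2 - (1/2) * ε * p2 * n3 - (1/2) * ε * m3 * q2 + (1/2) * ε * m2 * q3) * h10
    + (- p2 - (1/2) * ε * p3 * n1 + (1/2) * ε * p1 * n3 + (1/2) * ε * m3 * q1 - (1/2) * ε * m1 * q3) * h11
    + (- q3 - (1/2) * ε * p2 * n1 + (1/2) * ε * p1 * n2 + (1/2) * ε * m2 * q1 - (1/2) * ε * m1 * q2) * h12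
end

section
/- Suppose (m,p) and (m̃,p̃) are KHK-related for the first Clebsch flow. Then c1(p)·(m̃1p1 − m1p̃1) + c2(p)·(m̃2p2 − m2p̃2) + c3(p)·(m̃3p3 − m3p̃3) = 0; that is, the discrete Wronskians Wᵢ⁽¹⁾ = m̃ᵢpᵢ − mᵢp̃ᵢ, i = 1,2,3, satisfy a linear relation with coefficients (c1(p), c2(p), c3(p)). -/
def c1 (ε ω1 ω2 ω3 p1 p2 p3 : ℝ) : ℝ :=
  1 + ε ^ 2 * (ω1 - ω2) * p2 ^ 2 + ε ^ 2 * (ω1 - ω3) * p3 ^ 2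
def c2 (ε ω1 ω2 ω3 p1 p2 p3 : ℝ) : ℝ :=
  1 + ε ^ 2 * (ω2 - ω1) * p1 ^ 2 + ε ^ 2 * (ω2 - ω3) * p3 ^ 2
def c3 (ε ω1 ω2 ω3 p1 p2 p3 : ℝ) : ℝ :=
  1 + ε ^ 2 * (ω3 - ω1) * p1 ^ 2 + ε ^ 2 * (ω3 - ω2) * p2 ^ 2

/-- Discrete Wronskians HK basis for the first Clebsch flow (Theorem 9):
`c₁(p)(m̃₁p₁−m₁p̃₁) + c₂(p)(m̃₂p₂−m₂p̃₂) + c₃(p)(m̃₃p₃−m₃p̃₃) = 0`. -/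
theorem clebsch1_first_order_wronskian_basis
    (ε ω1 ω2 ω3 m1 m2 m3 p1 p2 p3 n1 n2 n3 q1 q2 q3 : ℝ)
    (hK : Clebsch1KHK ε ω1 ω2 ω3 m1 m2 m3 p1 p2 p3 n1 n2 n3 q1 q2 q3) :
    c1 ε ω1 ω2 ω3 p1 p2 p3 * (n1 * p1 - m1 * q1)
    + c2 ε ω1 ω2 ω3 p1 p2 p3 * (n2 * p2 - m2 * q2)
    + c3 ε ω1 ω2 ω3 p1 p2 p3 * (n3 * p3 - m3 * q3) = 0 := by
  obtain ⟨h1, h2, h3, h4, h5, h6⟩ := hK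
  simp only [c1, c2, c3]
  linear_combination (p1 + ε * m3 * p2 - ε * m2 * p3) * h1
    + (p2 - ε * m3 * p1 + ε * m1 * p3) * h2
    + (p3 + ε * m2 * p1 - ε * m1 * p2) * h3
    + (-m1 - ε * (ω3 - ω2) * p2 * p3) * h4
    + (-m2 + ε * (ω3 - ω1) * p1 * p3) * h5
    + (-m3 - ε * (ω2 - ω1) * p1 * p2) * h6
end

section
/- Suppose (m,p) and (m̃,p̃) are KHK-related for the first Clebsch flow. Then c1(p)·m̃1p1 + c2(p)·m̃2p2 + c3(p)·m̃3p3 = C1(p,p̃)·m1p1 + C2(p,p̃)·m2p2 + C3(p,p̃)·m3p3. -/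
def C1 (ε ω1 ω2 ω3 p1 p2 p3 q1 q2 q3 : ℝ) : ℝ :=
  1 + ε ^ 2 * (ω2 - ω1) * p2 * q2 + ε ^ 2 * (ω3 - ω1) * p3 * q3
def C2 (ε ω1 ω2 ω3 p1 p2 p3 q1 q2 q3 : ℝ) : ℝ :=
  1 + ε ^ 2 * (ω1 - ω2) * p1 * q1 + ε ^ 2 * (ω3 - ω2) * p3 * q3
def C3 (ε ω1 ω2 ω3 p1 p2 p3 q1 q2 q3 : ℝ) : ℝ :=
  1 + ε ^ 2 * (ω1 - ω3) * p1 * q1 + ε ^ 2 * (ω2 - ω3) * p2 * q2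

/-- Identity (17) for the first Clebsch flow:
`∑ cᵢ(p) m̃ᵢpᵢ = ∑ Cᵢ(p,p̃) mᵢpᵢ` on orbits of the KHK map. -/
theorem clebsch1_identity_eq1
    (ε ω1 ω2 ω3 m1 m2 m3 p1 p2 p3 n1 n2 n3 q1 q2 q3 : ℝ)
    (hK : Clebsch1KHK ε ω1 ω2 ω3 m1 m2 m3 p1 p2 p3 n1 n2 n3 q1 q2 q3) :
    c1 ε ω1 ω2 ω3 p1 p2 p3 * (n1 * p1)
    + c2 ε ω1 ω2 ω3 p1 p2 p3 * (n2 * p2)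
    + c3 ε ω1 ω2 ω3 p1 p2 p3 * (n3 * p3)
    = C1 ε ω1 ω2 ω3 p1 p2 p3 q1 q2 q3 * (m1 * p1)
    + C2 ε ω1 ω2 ω3 p1 p2 p3 q1 q2 q3 * (m2 * p2)
    + C3 ε ω1 ω2 ω3 p1 p2 p3 q1 q2 q3 * (m3 * p3) := by
  obtain ⟨h1, h2, h3, h4, h5, h6⟩ := hK
  simp only [c1, c2, c3, C1, C2, C3]
  linear_combination p1 * h1 + p2 * h2 + p3 * h3
    + ε * (ω2 - ω3) * p2 * p3 * h4
    + ε * (ω3 - ω1) * p1 * p3 * h5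
    + ε * (ω1 - ω2) * p1 * p2 * h6
end

section
/- Suppose (m,p) and (m̃,p̃) are KHK-related for the first Clebsch flow. Then c1(p)·m1p̃1 + c2(p)·m2p̃2 + c3(p)·m3p̃3 = C1(p,p̃)·m1p1 + C2(p,p̃)·m2p2 + C3(p,p̃)·m3p3. -/
/-- Identity (18) for the first Clebsch flow:
`∑ cᵢ(p) mᵢp̃ᵢ = ∑ Cᵢ(p,p̃) mᵢpᵢ` on orbits of the KHK map. -/
theorem clebsch1_identity_eq2
    (ε ω1 ω2 ω3 m1 m2 m3 p1 p2 p3 n1 n2 n3 q1 q2 q3 : ℝ)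
    (hK : Clebsch1KHK ε ω1 ω2 ω3 m1 m2 m3 p1 p2 p3 n1 n2 n3 q1 q2 q3) :
    c1 ε ω1 ω2 ω3 p1 p2 p3 * (m1 * q1)
    + c2 ε ω1 ω2 ω3 p1 p2 p3 * (m2 * q2)
    + c3 ε ω1 ω2 ω3 p1 p2 p3 * (m3 * q3)
    = C1 ε ω1 ω2 ω3 p1 p2 p3 q1 q2 q3 * (m1 * p1)
    + C2 ε ω1 ω2 ω3 p1 p2 p3 q1 q2 q3 * (m2 * p2)
    + C3 ε ω1 ω2 ω3 p1 p2 p3 q1 q2 q3 * (m3 * p3) := by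
  obtain ⟨h1, h2, h3, h4, h5, h6⟩ := hK
  simp only [c1, c2, c3, C1, C2, C3]
  linear_combination m1 * h4 + m2 * h5 + m3 * h6
    + ε * (m2 * p3 - m3 * p2) * h1
    + ε * (m3 * p1 - m1 * p3) * h2
    + ε * (m1 * p2 - m2 * p1) * h3
end

section
/- Suppose (m,p) and (m̃,p̃) are KHK-related for the Kirchhoff system. Define c1(m,p) = 1 + ε²a3(a1−a3)m3² + ε²a1(b1−b3)p3² and c3(m,p) = 2a3/a1 − 1 + ε²a1(a3−a1)(m1²+m2²) + ε²a3(b3−b1)(p1²+p2²). Then c3(m̃,p̃)·c1(m,p) = c3(m,p)·c1(m̃,p̃); that is, the quadratic-fractional function I0(m,p) = c3(m,p)/c1(m,p) is an integral of motion of the Kahan–Hirota–Kimura discretization of the Kirchhoff system. -/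
/-- `(m,p)` and `(n,q)` are KHK-related for the Kirchhoff system. -/
def KirchhoffKHK (ε a1 a3 b1 b3 m1 m2 m3 p1 p2 p3 n1 n2 n3 q1 q2 q3 : ℝ) : Prop :=
  n1 - m1 = ε * (a3 - a1) * (n2 * m3 + m2 * n3) + ε * (b3 - b1) * (q2 * p3 + p2 * q3) ∧
  n2 - m2 = ε * (a1 - a3) * (n3 * m1 + m3 * n1) + ε * (b1 - b3) * (q3 * p1 + p3 * q1) ∧
  n3 = m3 ∧
  q1 - p1 = ε * a3 * (n3 * p2 + m3 * q2) - ε * a1 * (n2 * p3 + m2 * q3) ∧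
  q2 - p2 = ε * a1 * (n1 * p3 + m1 * q3) - ε * a3 * (n3 * p1 + m3 * q1) ∧
  q3 - p3 = ε * a1 * (n2 * p1 + m2 * q1 - n1 * p2 - m1 * q2)

noncomputable def kc1 (ε a1 a3 b1 b3 m3 p3 : ℝ) : ℝ :=
  1 + ε ^ 2 * a3 * (a1 - a3) * m3 ^ 2 + ε ^ 2 * a1 * (b1 - b3) * p3 ^ 2
noncomputable def kc3 (ε a1 a3 b1 b3 m1 m2 p1 p2 : ℝ) : ℝ :=
  2 * a3 / a1 - 1 + ε ^ 2 * a1 * (a3 - a1) * (m1 ^ 2 + m2 ^ 2)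
    + ε ^ 2 * a3 * (b3 - b1) * (p1 ^ 2 + p2 ^ 2)

/-- Quadratic-fractional integral `I₀ = c₃/c₁` of the KHK discretization of the
Kirchhoff system (Theorem 13). -/
theorem kirchhoff_quadratic_fractional_integral
    (ε a1 a3 b1 b3 : ℝ) (ha1 : a1 ≠ 0)
    (m1 m2 m3 p1 p2 p3 n1 n2 n3 q1 q2 q3 : ℝ)
    (hK : KirchhoffKHK ε a1 a3 b1 b3 m1 m2 m3 p1 p2 p3 n1 n2 n3 q1 q2 q3) :
    kc3 ε a1 a3 b1 b3 n1 n2 q1 q2 * kc1 ε a1 a3 b1 b3 m3 p3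
    = kc3 ε a1 a3 b1 b3 m1 m2 p1 p2 * kc1 ε a1 a3 b1 b3 n3 q3 := by
  obtain ⟨h1, h2, h3, h4, h5, h6⟩ := hK
  subst n3
  have hkc3 : ∀ x1 x2 y1 y2 : ℝ,
      a1 * kc3 ε a1 a3 b1 b3 x1 x2 y1 y2
        = 2 * a3 - a1 + ε ^ 2 * a1 ^ 2 * (a3 - a1) * (x1 ^ 2 + x2 ^ 2)
          + ε ^ 2 * a1 * a3 * (b3 - b1) * (y1 ^ 2 + y2 ^ 2) := by
    intro x1 x2 y1 y2
    unfold kc3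
    field_simp
  apply mul_left_cancel₀ ha1
  calc a1 * (kc3 ε a1 a3 b1 b3 n1 n2 q1 q2 * kc1 ε a1 a3 b1 b3 m3 p3)
      = (a1 * kc3 ε a1 a3 b1 b3 n1 n2 q1 q2) * kc1 ε a1 a3 b1 b3 m3 p3 := by ring
    _ = (a1 * kc3 ε a1 a3 b1 b3 m1 m2 p1 p2) * kc1 ε a1 a3 b1 b3 m3 q3 := by
        rw [hkc3, hkc3]
        unfold kc1
        linear_combination
          (ε ^ 2 * a1 ^ 2 * (a3 - a1) * (n1 + m1)
            + ε ^ 3 * a1 ^ 2 * a3 * (a3 - a1) * m3 * (n2 - m2)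
            + ε ^ 3 * a1 ^ 2 * a3 * (b3 - b1) * (p3 * q2 - p2 * q3)) * h1
          + (ε ^ 2 * a1 ^ 2 * (a3 - a1) * (n2 + m2)
            - ε ^ 3 * a1 ^ 2 * a3 * (a3 - a1) * m3 * (n1 - m1)
            - ε ^ 3 * a1 ^ 2 * a3 * (b3 - b1) * (p3 * q1 - p1 * q3)) * h2
          + (ε ^ 2 * a1 * a3 * (b3 - b1) * (q1 + p1)
            + ε ^ 3 * a1 * a3 * (a3 - a1) * (b3 - b1) * m3 * (q2 - p2)
            - ε ^ 3 * a1 ^ 2 * (a3 - a1) * (b3 - b1) * (p3 * n2 - m2 * q3)) * h4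
          + (ε ^ 2 * a1 * a3 * (b3 - b1) * (q2 + p2)
            - ε ^ 3 * a1 * a3 * (a3 - a1) * (b3 - b1) * m3 * (q1 - p1)
            + ε ^ 3 * a1 ^ 2 * (a3 - a1) * (b3 - b1) * (p3 * n1 - m1 * q3)) * h5
          + (ε ^ 2 * a1 * (b3 - b1) * (2 * a3 - a1) * (q3 + p3)) * h6
    _ = a1 * (kc3 ε a1 a3 b1 b3 m1 m2 p1 p2 * kc1 ε a1 a3 b1 b3 m3 q3) := by ring
end

section
/- Fix reals a, b, c, ε. Suppose x1, x2, y1, y2, L, M ∈ ℝ satisfy y1 − x1 = εL(b·y1 + c·y2) + εM(b·x1 + c·x2) and y2 − x2 = −εL(a·y1 + b·y2) − εM(a·x1 + b·x2). Then (a·x1·y1 + b(x1·y2 + y1·x2) + c·x2·y2)·(1 + ε²(ac−b²)L²) = (a·x1² + 2b·x1·x2 + c·x2²)·(1 − ε²(ac−b²)·L·M). Consequently, on orbits of the Kahan discretization of the vector field ẋ1 = ℓ(x)(bx1+cx2), ẋ2 = −ℓ(x)(ax1+bx2) (ℓ affine), the polarized function F̂(x,ε) = (a·x1·x̃1 + b(x1·x̃2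 + x̃1·x2) + c·x2·x̃2)/(1 − ε²(ac−b²)ℓ(x)ℓ(x̃)) coincides with the known integral F(x,ε) = (a·x1² + 2b·x1·x2 + c·x2²)/(1 + ε²(ac−b²)ℓ(x)²). -/
/-- Theorem 9 (Celledoni–McLachlan–Owren–Quispel-type identity): if
`y1 − x1 = εL(b·y1 + c·y2) + εM(b·x1 + c·x2)` and
`y2 − x2 = −εL(a·y1 + b·y2) − εM(a·x1 + b·x2)`
(the first two equations of the Kahan discretization with `L = ℓ(x)`, `M = ℓ(x̃)`),
then the polarized quadratic-fractional function coincides with the integral `F`: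
`(a·x1·y1 + b(x1·y2 + y1·x2) + c·x2·y2)(1 + ε²(ac−b²)L²)
 = (a·x1² + 2b·x1·x2 + c·x2²)(1 − ε²(ac−b²)LM)`. -/
theorem kahan_polarized_integral_coincides
    (a b c ε x1 x2 y1 y2 L M : ℝ)
    (h1 : y1 - x1 = ε * L * (b * y1 + c * y2) + ε * M * (b * x1 + c * x2))
    (h2 : y2 - x2 = -(ε * L * (a * y1 + b * y2)) - ε * M * (a * x1 + b * x2)) :
    (a * x1 * y1 + b * (x1 * y2 + y1 * x2) + c * x2 * y2)
      * (1 + ε ^ 2 * (a * c - b ^ 2) * L ^ 2)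
    = (a * x1 ^ 2 + 2 * b * x1 * x2 + c * x2 ^ 2)
      * (1 - ε ^ 2 * (a * c - b ^ 2) * L * M) := by
  linear_combination (a*x1 + b*x2 - ε*L*(a*c-b^2)*x2) * h1 + (b*x1 + c*x2 + ε*L*(a*c-b^2)*x1) * h2
end
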